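/- arXiv:1807.09089 — 4 statements merged into one kernel-verified Lean document; each statement's English description precedes it below -/
import Mathlib

section
/- Let K actions have i.i.d. reward sequences as in the setup and let π be any policy. Then the risk-averse regret admits the exact decomposition R_π(T) = Σ_{k=1}^K E[τ_{k,T}]·Γ_k + Σ_{t=1}^T E[( Σ_{k∈[K]\{k*}} (1[π_t = k] − Pr[π_t = k])·Δ_k )²]. -/
open MeasureTheory ProbabilityTheory Finset

lemma per_step_aux
    {Ω : Type*} [MeasurableSpace Ω] (P : Measure Ω) [IsProbabilityMeasure P]
    {K : ℕ}
    (lam : ℝ)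
    (X : Fin K → Ω → ℝ)
    (hXmeas : ∀ k, Measurable (X k))
    (hXL2 : ∀ k, MemLp (X k) 2 P)
    (m v : Fin K → ℝ)
    (hmean : ∀ k, ∫ ω, X k ω ∂P = m k)
    (hvar : ∀ k, variance (X k) P = v k)
    (g : Ω → Fin K)
    (hg : Measurable g)
    (hgindep : IndepFun g (fun ω (k : Fin K) => X k ω) P)
    (kstar : Fin K)
    (p : Fin K → ℝ) (hp : ∀ k, p k = (P {ω' | g ω' = k}).toReal) :
    variance (fun ω => X (g ω) ω) P - lam * ∫ ω, X (g ω) ω ∂P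
        - (v kstar - lam * m kstar)
      = (∑ k, p k * ((v k - lam * m k) - (v kstar - lam * m kstar)))
        + ∫ ω, (∑ k ∈ Finset.univ.erase kstar,
            ((if g ω = k then (1:ℝ) else 0) - p k) * (m k - m kstar)) ^ 2 ∂P := by
  have hAmeas : ∀ k : Fin K, MeasurableSet {ω' | g ω' = k} := fun k =>
    hg (measurableSet_singleton k)
  have hind_eq : ∀ (k : Fin K) (c : ℝ),
      (fun ω => if g ω = k then c else 0) = ({ω' | g ω' = k}).indicator (fun _ => c) := by
    intro k c; funext ω
    by_cases h : g ω = k <;> simp [Set.indicator_apply, Set.mem_setOf_eq, h]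
  have hint_ind : ∀ (k : Fin K) (c : ℝ),
      ∫ ω, (if g ω = k then c else 0) ∂P = p k * c := by
    intro k c
    rw [hind_eq, integral_indicator_const _ (hAmeas k), smul_eq_mul, hp]; rfl
  have hint_int : ∀ (k : Fin K) (c : ℝ),
      Integrable (fun ω => if g ω = k then c else 0) P := by
    intro k c; rw [hind_eq]; exact (integrable_const c).indicator (hAmeas k)
  have hImeas : ∀ k : Fin K, Measurable (fun ω => if g ω = k then (1:ℝ) else 0) := by
    intro k; exact Measurable.ite (hAmeas k) measurable_const measurable_const
  have psum : ∑ k, p k = 1 := by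
    have h1 : ∀ ω : Ω, (∑ k, if g ω = k then (1:ℝ) else 0) = 1 := by
      intro ω; rw [Finset.sum_ite_eq]; simp
    calc ∑ k, p k = ∑ k, ∫ ω, (if g ω = k then (1:ℝ) else 0) ∂P := by
          simp [hint_ind]
      _ = ∫ ω, ∑ k, (if g ω = k then (1:ℝ) else 0) ∂P :=
          (integral_finset_sum _ fun k _ => hint_int k 1).symm
      _ = 1 := by simp [h1]
  have hindep : ∀ k : Fin K,
      IndepFun (fun ω => if g ω = k then (1:ℝ) else 0) (X k) P := by
    intro k
    have h1 : Measurable (fun j : Fin K => if j = k then (1:ℝ) else 0) :=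
      measurable_of_countable _
    have h2 : Measurable (fun f : Fin K → ℝ => f k) := measurable_pi_apply k
    exact hgindep.comp h1 h2
  have hmul2 : ∀ k : Fin K,
      MemLp (fun ω => (if g ω = k then (1:ℝ) else 0) * X k ω) 2 P := by
    intro k
    refine (hXL2 k).of_le ((hImeas k).mul (hXmeas k)).aestronglyMeasurable
      (Filter.Eventually.of_forall fun ω => ?_)
    by_cases h : g ω = k <;> simp [h, Real.norm_eq_abs, abs_nonneg]
  have hmulint : ∀ k : Fin K,
      Integrable (fun ω => (if g ω = k then (1:ℝ) else 0) * X k ω) P :=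
    fun k => (hmul2 k).integrable one_le_two
  have hsqint : ∀ k : Fin K,
      Integrable (fun ω => (if g ω = k then (1:ℝ) else 0) * (X k ω) ^ 2) P := by
    intro k
    refine (hXL2 k).integrable_sq.mono
      ((hImeas k).mul ((hXmeas k).pow_const 2)).aestronglyMeasurable
      (Filter.Eventually.of_forall fun ω => ?_)
    by_cases h : g ω = k <;> simp [h, Real.norm_eq_abs, abs_nonneg, sq_abs, sq_nonneg]
  have hsum_repr : (fun ω => X (g ω) ω)
      = fun ω => ∑ k, (if g ω = k then (1:ℝ) else 0) * X k ω := by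
    funext ω
    simp only [ite_mul, one_mul, zero_mul]
    rw [Finset.sum_ite_eq]; simp
  have hsq_repr : ∀ ω, (X (g ω) ω) ^ 2
      = ∑ k, (if g ω = k then (1:ℝ) else 0) * (X k ω) ^ 2 := by
    intro ω
    simp only [ite_mul, one_mul, zero_mul]
    rw [Finset.sum_ite_eq]; simp
  have hEX2 : ∀ k, ∫ ω, (X k ω) ^ 2 ∂P = v k + m k ^ 2 := by
    intro k
    have h := variance_eq_sub (hXL2 k)
    simp only [Pi.pow_apply] at h
    rw [hvar, hmean] at h
    linarith
  have hE1 : ∫ ω, X (g ω) ω ∂P = ∑ k, p k * m k := by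
    rw [hsum_repr, integral_finset_sum _ fun k _ => hmulint k]
    refine Finset.sum_congr rfl fun k _ => ?_
    have h := (hindep k).integral_mul_eq_mul_integral (hImeas k).aestronglyMeasurable
      (hXmeas k).aestronglyMeasurable
    show integral P ((fun ω => if g ω = k then (1:ℝ) else 0) * X k) = p k * m k
    rw [h, hmean, hint_ind k 1, mul_one]
  have hE2 : ∫ ω, (X (g ω) ω) ^ 2 ∂P = ∑ k, p k * (v k + m k ^ 2) := by
    rw [integral_congr_ae (Filter.Eventually.of_forall hsq_repr),
      integral_finset_sum _ fun k _ => hsqint k]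
    refine Finset.sum_congr rfl fun k _ => ?_
    have hik : IndepFun (fun ω => if g ω = k then (1:ℝ) else 0)
        (fun ω => (X k ω) ^ 2) P :=
      (hindep k).comp measurable_id
        ((measurable_id.pow_const 2) : Measurable fun x : ℝ => x ^ 2)
    have h := hik.integral_mul_eq_mul_integral (hImeas k).aestronglyMeasurable
      ((hXmeas k).pow_const 2).aestronglyMeasurable
    show integral P ((fun ω => if g ω = k then (1:ℝ) else 0) * fun ω => X k ω ^ 2)
      = p k * (v k + m k ^ 2)
    rw [h, hEX2, hint_ind k 1, mul_one]
  have hL2 : MemLp (fun ω => X (g ω) ω) 2 P := by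
    have heq : (∑ k : Fin K, fun ω => (if g ω = k then (1:ℝ) else 0) * X k ω)
        = fun ω => ∑ k, (if g ω = k then (1:ℝ) else 0) * X k ω := by
      funext ω; simp
    rw [hsum_repr, ← heq]
    exact memLp_finset_sum' _ fun k _ => hmul2 k
  have hVar : variance (fun ω => X (g ω) ω) P
      = (∑ k, p k * (v k + m k ^ 2)) - (∑ k, p k * m k) ^ 2 := by
    rw [variance_eq_sub hL2]
    simp only [Pi.pow_apply]
    rw [hE2, hE1]
  have hZsq : ∀ ω, (∑ k ∈ Finset.univ.erase kstar,
        ((if g ω = k then (1:ℝ) else 0) - p k) * (m k - m kstar)) ^ 2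
      = ∑ k, (if g ω = k then (m k - (∑ j, p j * m j)) ^ 2 else 0) := by
    intro ω
    have h1 : ∑ k ∈ Finset.univ.erase kstar,
        ((if g ω = k then (1:ℝ) else 0) - p k) * (m k - m kstar)
        = m (g ω) - (∑ j, p j * m j) := by
      have e0 : ∀ k, ((if g ω = k then (1:ℝ) else 0) - p k) * (m k - m kstar)
          = (if g ω = k then (m k - m kstar) else 0) - p k * (m k - m kstar) := by
        intro k; split_ifs <;> ring
      simp only [e0, Finset.sum_sub_distrib]
      have h2 : ∑ k ∈ Finset.univ.erase kstar, (if g ω = k then (m k - m kstar) else 0)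
          = ∑ k, (if g ω = k then (m k - m kstar) else 0) := by
        apply Finset.sum_erase; simp
      have h3 : ∑ k ∈ Finset.univ.erase kstar, p k * (m k - m kstar)
          = ∑ k, p k * (m k - m kstar) := by
        apply Finset.sum_erase; simp
      have h4 : ∑ k, p k * (m k - m kstar) = (∑ j, p j * m j) - m kstar := by
        simp only [mul_sub, Finset.sum_sub_distrib, ← Finset.sum_mul, psum]
        ring
      rw [h2, h3, Finset.sum_ite_eq, h4]
      simp only [Finset.mem_univ, if_true]
      ring
    rw [h1, Finset.sum_ite_eq]
    simp
  have hEZ : ∫ ω, (∑ k ∈ Finset.univ.erase kstar,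
        ((if g ω = k then (1:ℝ) else 0) - p k) * (m k - m kstar)) ^ 2 ∂P
      = ∑ k, p k * (m k - (∑ j, p j * m j)) ^ 2 := by
    rw [integral_congr_ae (Filter.Eventually.of_forall hZsq),
      integral_finset_sum _ fun k _ => hint_int k _]
    exact Finset.sum_congr rfl fun k _ => hint_ind k _
  rw [hVar, hE1, hEZ]
  have e1 : ∑ k, p k * (v k + m k ^ 2)
      = (∑ k, p k * v k) + ∑ k, p k * m k ^ 2 := by
    simp [mul_add, Finset.sum_add_distrib]
  have e2 : ∑ k, p k * ((v k - lam * m k) - (v kstar - lam * m kstar))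
      = (∑ k, p k * v k) - lam * (∑ k, p k * m k)
        - (v kstar - lam * m kstar) := by
    have h : ∀ k, p k * ((v k - lam * m k) - (v kstar - lam * m kstar))
        = p k * v k - lam * (p k * m k) - (v kstar - lam * m kstar) * p k := by
      intro k; ring
    simp only [h, Finset.sum_sub_distrib, ← Finset.mul_sum, psum, mul_one]
  have e3 : ∑ k, p k * (m k - (∑ j, p j * m j)) ^ 2
      = (∑ k, p k * m k ^ 2) - (∑ k, p k * m k) ^ 2 := by
    have h : ∀ k, p k * (m k - (∑ j, p j * m j)) ^ 2
        = p k * m k ^ 2 - 2 * (∑ j, p j * m j) * (p k * m k)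
          + (∑ j, p j * m j) ^ 2 * p k := by
      intro k; ring
    simp only [h, Finset.sum_add_distrib, Finset.sum_sub_distrib, ← Finset.mul_sum, psum,
      mul_one]
    ring
  rw [e1, e2, e3]
  ring

/-- **Regret decomposition (Lemma 2).**
The risk-averse regret of any policy decomposes exactly as
`R_π(T) = Σ_k E[τ_{k,T}]·Γ_k + Σ_t E[(Σ_{k≠k*} (1[π_t = k] − Pr[π_t = k])·Δ_k)²]`. -/
theorem regret_decomposition
    {Ω : Type*} [MeasurableSpace Ω] (P : Measure Ω) [IsProbabilityMeasure P]
    (K T : ℕ) (hK : 0 < K)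
    (lam : ℝ) (hlam : 0 ≤ lam)
    -- rewards: `X k t` is the reward of action `k` at time `t`
    (X : Fin K → Fin T → Ω → ℝ)
    (hXmeas : ∀ k t, Measurable (X k t))
    (hXL2 : ∀ k t, MemLp (X k t) 2 P)
    -- the rewards are jointly independent across actions and times ...
    (hXindep : iIndepFun (fun p : Fin K × Fin T => X p.1 p.2) P)
    -- ... and identically distributed over time for each action
    (hXid : ∀ k (t t' : Fin T), Measure.map (X k t) P = Measure.map (X k t') P)
    (m v : Fin K → ℝ)
    (hmean : ∀ k t, ∫ ω, X k t ω ∂P = m k)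
    (hvar : ∀ k t, variance (X k t) P = v k)
    -- the policy
    (π : Fin T → Ω → Fin K)
    (hπmeas : ∀ t, Measurable (π t))
    -- the action at time `t` is independent of the time-`t` rewards
    (hπindep : ∀ t, IndepFun (π t) (fun ω (k : Fin K) => X k t ω) P)
    -- the optimal action `k*`
    (kstar : Fin K)
    (hkstar : ∀ k, v kstar - lam * m kstar ≤ v k - lam * m k) :
    -- `R_π(T) = Σ_k E[τ_{k,T}]·Γ_k + Σ_t E[(Σ_{k≠k*}(1[π_t=k] − Pr[π_t=k])·Δ_k)²]`
    (∑ t, (variance (fun ω => X (π t ω) t ω) P - lam * ∫ ω, X (π t ω) t ω ∂P))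
        - T * (v kstar - lam * m kstar)
      = (∑ k, (∫ ω, (∑ t, if π t ω = k then (1:ℝ) else 0) ∂P)
            * ((v k - lam * m k) - (v kstar - lam * m kstar)))
        + ∑ t, ∫ ω, (∑ k ∈ Finset.univ.erase kstar,
            ((if π t ω = k then (1:ℝ) else 0) - (P {ω' | π t ω' = k}).toReal)
              * (m k - m kstar)) ^ 2 ∂P := by
  have key : ∀ t : Fin T,
      variance (fun ω => X (π t ω) t ω) P - lam * ∫ ω, X (π t ω) t ω ∂P
          - (v kstar - lam * m kstar)
        = (∑ k, (P {ω' | π t ω' = k}).toReal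
              * ((v k - lam * m k) - (v kstar - lam * m kstar)))
          + ∫ ω, (∑ k ∈ Finset.univ.erase kstar,
              ((if π t ω = k then (1:ℝ) else 0) - (P {ω' | π t ω' = k}).toReal)
                * (m k - m kstar)) ^ 2 ∂P := fun t =>
    per_step_aux P lam (fun k => X k t) (fun k => hXmeas k t) (fun k => hXL2 k t)
      m v (fun k => hmean k t) (fun k => hvar k t) (π t) (hπmeas t) (hπindep t) kstar
      (fun k => (P {ω' | π t ω' = k}).toReal) (fun k => rfl)
  have hAmeas : ∀ (t : Fin T) (k : Fin K), MeasurableSet {ω' | π t ω' = k} :=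
    fun t k => hπmeas t (measurableSet_singleton k)
  have hind_eq : ∀ (t : Fin T) (k : Fin K),
      (fun ω => if π t ω = k then (1:ℝ) else 0)
        = ({ω' | π t ω' = k}).indicator (fun _ => (1:ℝ)) := by
    intro t k; funext ω
    by_cases h : π t ω = k <;> simp [Set.indicator_apply, Set.mem_setOf_eq, h]
  have hτ : ∀ k : Fin K, ∫ ω, (∑ t, if π t ω = k then (1:ℝ) else 0) ∂P
      = ∑ t, (P {ω' | π t ω' = k}).toReal := by
    intro k
    rw [integral_finset_sum _ fun t _ => by
      rw [hind_eq t k]; exact (integrable_const (1:ℝ)).indicator (hAmeas t k)]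
    refine Finset.sum_congr rfl fun t _ => ?_
    rw [hind_eq t k, integral_indicator_const _ (hAmeas t k), smul_eq_mul, mul_one]; rfl
  calc (∑ t, (variance (fun ω => X (π t ω) t ω) P - lam * ∫ ω, X (π t ω) t ω ∂P))
        - T * (v kstar - lam * m kstar)
      = ∑ t : Fin T, (variance (fun ω => X (π t ω) t ω) P
          - lam * (∫ ω, X (π t ω) t ω ∂P) - (v kstar - lam * m kstar)) := by
        rw [Finset.sum_sub_distrib, Finset.sum_sub_distrib, Finset.sum_const,
          Finset.card_univ, Fintype.card_fin, nsmul_eq_mul, Finset.sum_sub_distrib]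
    _ = ∑ t : Fin T, ((∑ k, (P {ω' | π t ω' = k}).toReal
              * ((v k - lam * m k) - (v kstar - lam * m kstar)))
          + ∫ ω, (∑ k ∈ Finset.univ.erase kstar,
              ((if π t ω = k then (1:ℝ) else 0) - (P {ω' | π t ω' = k}).toReal)
                * (m k - m kstar)) ^ 2 ∂P) := Finset.sum_congr rfl fun t _ => key t
    _ = (∑ t : Fin T, ∑ k, (P {ω' | π t ω' = k}).toReal
              * ((v k - lam * m k) - (v kstar - lam * m kstar)))
          + ∑ t, ∫ ω, (∑ k ∈ Finset.univ.erase kstar,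
              ((if π t ω = k then (1:ℝ) else 0) - (P {ω' | π t ω' = k}).toReal)
                * (m k - m kstar)) ^ 2 ∂P := Finset.sum_add_distrib
    _ = (∑ k, (∫ ω, (∑ t, if π t ω = k then (1:ℝ) else 0) ∂P)
            * ((v k - lam * m k) - (v kstar - lam * m kstar)))
        + ∑ t, ∫ ω, (∑ k ∈ Finset.univ.erase kstar,
            ((if π t ω = k then (1:ℝ) else 0) - (P {ω' | π t ω' = k}).toReal)
              * (m k - m kstar)) ^ 2 ∂P := by
        congr 1
        rw [Finset.sum_comm]
        exact Finset.sum_congr rfl fun k _ => by rw [hτ k, Finset.sum_mul]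
end

section
/- Let X_1,…,X_K be independent square-integrable real random variables with means μ_1,…,μ_K and variances σ_1²,…,σ_K², let λ ≥ 0, and let A be a [K]-valued random variable independent of (X_1,…,X_K) with p_k = Pr[A = k]. Fix k* ∈ [K] and set Δ_k = μ_k − μ_{k*}, MV_k = σ_k² − λμ_k. Then MV(X_A) = Σ_{k=1}^K p_k·MV_k + E[( Σ_{k∈[K]\{k*}} (1[A = k] − p_k)·Δ_k )²]. -/
open MeasureTheory ProbabilityTheory Finset

/-- **Mean-variance of a randomly chosen action's reward.** If `A` is a `[K]`-valued
random variable independent of the independent square-integrable rewards `X_1, …, X_K`,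
`λ ≥ 0`, `k* ∈ [K]`, `Δ_k = μ_k − μ_{k*}` and `MV_k = σ_k² − λμ_k`, then
`MV(X_A) = Σ_k p_k·MV_k + E[(Σ_{k≠k*} (1[A = k] − p_k)·Δ_k)²]` where `p_k = Pr[A = k]`
and `MV(X) = Var(X) − λ·E[X]`. -/
theorem mean_variance_of_randomly_chosen_action
    {Ω : Type*} [MeasurableSpace Ω] (P : Measure Ω) [IsProbabilityMeasure P]
    (K : ℕ) (hK : 0 < K)
    (lam : ℝ) (hlam : 0 ≤ lam)
    (X : Fin K → Ω → ℝ)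
    (hXmeas : ∀ k, Measurable (X k))
    (hXL2 : ∀ k, MemLp (X k) 2 P)
    (hXindep : iIndepFun X P)
    (m v : Fin K → ℝ)
    (hmean : ∀ k, ∫ ω, X k ω ∂P = m k)
    (hvar : ∀ k, variance (X k) P = v k)
    (A : Ω → Fin K) (hA : Measurable A)
    (hAX : IndepFun A (fun ω (k : Fin K) => X k ω) P)
    (kstar : Fin K) :
    variance (fun ω => ∑ k, (if A ω = k then (1:ℝ) else 0) * X k ω) P
        - lam * ∫ ω, (∑ k, (if A ω = k then (1:ℝ) else 0) * X k ω) ∂P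
      = (∑ k, (P {ω | A ω = k}).toReal * (v k - lam * m k))
        + ∫ ω, (∑ k ∈ Finset.univ.erase kstar,
            ((if A ω = k then (1:ℝ) else 0) - (P {ω' | A ω' = k}).toReal)
              * (m k - m kstar)) ^ 2 ∂P := by
  classical
  set p : Fin K → ℝ := fun k => (P {ω | A ω = k}).toReal with hpdef
  have hp : ∀ k : Fin K, (P {ω | A ω = k}).toReal = p k := fun k => rfl
  simp only [hp]
  set S : ℝ := ∑ k, p k * m k with hS
  have hfib : ∀ k : Fin K, MeasurableSet {ω | A ω = k} := fun k =>
    hA (measurableSet_singleton k)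
  -- indicator as Set.indicator
  have hindic : ∀ k : Fin K, (fun ω => if A ω = k then (1:ℝ) else 0)
      = Set.indicator {ω' | A ω' = k} (fun _ => (1:ℝ)) := by
    intro k; funext ω; simp [Set.indicator_apply, Set.mem_setOf_eq]
  -- integral of a function of A
  have L1 : ∀ f : Fin K → ℝ, ∫ ω, f (A ω) ∂P = ∑ j, p j * f j := by
    intro f
    have h1 : (fun ω => f (A ω))
        = fun ω => ∑ j, Set.indicator {ω' | A ω' = j} (fun _ => f j) ω := by
      funext ω
      simp [Set.indicator_apply, Set.mem_setOf_eq, Finset.sum_ite_eq]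
    rw [h1, integral_finset_sum]
    · refine Finset.sum_congr rfl fun j _ => ?_
      rw [integral_indicator_const _ (hfib j)]
      simp [mul_comm]
      exact Or.inl rfl
    · exact fun j _ => (integrable_const (f j)).indicator (hfib j)
  have hsum1 : ∑ j, p j = 1 := by
    have := L1 (fun _ => (1:ℝ))
    simpa using this.symm
  -- measurability of indicators
  have hindmeas : ∀ k : Fin K, Measurable (fun ω => if A ω = k then (1:ℝ) else 0) :=
    fun k => (measurable_of_countable (fun j : Fin K => if j = k then (1:ℝ) else 0)).comp hA
  have hindbd : ∀ k : Fin K, ∀ ω, ‖if A ω = k then (1:ℝ) else 0‖ ≤ 1 := by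
    intro k ω; split <;> simp
  -- independence of indicator with X k and X k ^ 2
  have hIk : ∀ k : Fin K, IndepFun (fun ω => if A ω = k then (1:ℝ) else 0) (X k) P := by
    intro k
    exact hAX.comp (measurable_of_countable (fun j : Fin K => if j = k then (1:ℝ) else 0))
      (measurable_pi_apply k)
  have hIk2 : ∀ k : Fin K, IndepFun (fun ω => if A ω = k then (1:ℝ) else 0)
      (fun ω => X k ω ^ 2) P := by
    intro k
    exact hAX.comp (measurable_of_countable (fun j : Fin K => if j = k then (1:ℝ) else 0))
      ((measurable_pi_apply k).pow_const 2)
  have hXint : ∀ k, Integrable (X k) P := fun k => (hXL2 k).integrable one_le_two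
  have hX2int : ∀ k, Integrable (fun ω => X k ω ^ 2) P := by
    intro k
    simpa using (hXL2 k).integrable_sq
  have hindint : ∀ k : Fin K, Integrable (fun ω => if A ω = k then (1:ℝ) else 0) P := by
    intro k; rw [hindic k]; exact (integrable_const (1:ℝ)).indicator (hfib k)
  have hindintegral : ∀ k : Fin K, ∫ ω, (if A ω = k then (1:ℝ) else 0) ∂P = p k := by
    intro k
    rw [show (fun ω => if A ω = k then (1:ℝ) else 0) = _ from hindic k] at *
    rw [integral_indicator_const _ (hfib k)]
    simp
    rfl
  -- E[Y]
  have hEY : ∫ ω, (∑ k, (if A ω = k then (1:ℝ) else 0) * X k ω) ∂P = S := by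
    rw [integral_finset_sum]
    · refine Finset.sum_congr rfl fun k _ => ?_
      have := (hIk k).integral_mul_eq_mul_integral (hindint k).aestronglyMeasurable (hXint k).aestronglyMeasurable
      rw [show ((fun ω => if A ω = k then (1:ℝ) else 0) * X k)
        = (fun a => (if A a = k then (1:ℝ) else 0) * X k a) from rfl] at this
      rw [this, hindintegral k, hmean k]
    · exact fun k _ =>
        (hXint k).bdd_mul ((hindmeas k).aestronglyMeasurable) (ae_of_all _ (hindbd k))
  -- pointwise collapse
  have hYpt : ∀ ω, (∑ k, (if A ω = k then (1:ℝ) else 0) * X k ω) = X (A ω) ω := by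
    intro ω; simp [ite_mul, Finset.sum_ite_eq]
  have hY2pt : ∀ ω, (∑ k, (if A ω = k then (1:ℝ) else 0) * X k ω) ^ 2
      = ∑ k, (if A ω = k then (1:ℝ) else 0) * X k ω ^ 2 := by
    intro ω
    rw [hYpt ω]
    simp [ite_mul, Finset.sum_ite_eq]
  -- E[X_k^2]
  have hEX2 : ∀ k, ∫ ω, X k ω ^ 2 ∂P = v k + m k ^ 2 := by
    intro k
    have h := variance_eq_sub (hXL2 k)
    rw [hvar k, hmean k] at h
    have h2 : P[X k ^ 2] = ∫ ω, X k ω ^ 2 ∂P := by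
      apply integral_congr_ae; filter_upwards with ω; simp
    rw [h2] at h
    linarith
  -- E[Y^2]
  have hEY2 : ∫ ω, (∑ k, (if A ω = k then (1:ℝ) else 0) * X k ω) ^ 2 ∂P
      = ∑ k, p k * (v k + m k ^ 2) := by
    rw [integral_congr_ae (ae_of_all _ hY2pt), integral_finset_sum]
    · refine Finset.sum_congr rfl fun k _ => ?_
      have := (hIk2 k).integral_mul_eq_mul_integral (hindint k).aestronglyMeasurable (hX2int k).aestronglyMeasurable
      rw [show ((fun ω => if A ω = k then (1:ℝ) else 0) * fun ω => X k ω ^ 2)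
        = (fun a => (if A a = k then (1:ℝ) else 0) * X k a ^ 2) from rfl] at this
      rw [this, hindintegral k, hEX2 k]
    · exact fun k _ =>
        (hX2int k).bdd_mul ((hindmeas k).aestronglyMeasurable) (ae_of_all _ (hindbd k))
  -- Memℒp of Y
  have hMemY : MemLp (fun ω => ∑ k, (if A ω = k then (1:ℝ) else 0) * X k ω) 2 P := by
    apply memLp_finset_sum (μ := P)
    intro k _
    refine MemLp.of_le (hXL2 k)
      (((hindmeas k).mul (hXmeas k)).aestronglyMeasurable) (ae_of_all _ fun ω => ?_)
    rw [norm_mul]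
    calc ‖if A ω = k then (1:ℝ) else 0‖ * ‖X k ω‖
        ≤ 1 * ‖X k ω‖ := by
          apply mul_le_mul_of_nonneg_right (hindbd k ω) (norm_nonneg _)
      _ = ‖X k ω‖ := one_mul _
  -- variance of Y
  have hVarY : variance (fun ω => ∑ k, (if A ω = k then (1:ℝ) else 0) * X k ω) P
      = (∑ k, p k * (v k + m k ^ 2)) - S ^ 2 := by
    rw [variance_eq_sub hMemY]
    have h2 : P[(fun ω => ∑ k, (if A ω = k then (1:ℝ) else 0) * X k ω) ^ 2]
        = ∫ ω, (∑ k, (if A ω = k then (1:ℝ) else 0) * X k ω) ^ 2 ∂P := by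
      apply integral_congr_ae; filter_upwards with ω; simp
    rw [h2, hEY2, hEY]
  -- right integral
  set g : Fin K → ℝ := fun j => ∑ k ∈ Finset.univ.erase kstar,
      ((if j = k then (1:ℝ) else 0) - p k) * (m k - m kstar) with hgdef
  have hRint : ∫ ω, (∑ k ∈ Finset.univ.erase kstar,
      ((if A ω = k then (1:ℝ) else 0) - p k) * (m k - m kstar)) ^ 2 ∂P
      = ∑ j, p j * (g j) ^ 2 := L1 (fun j => (g j) ^ 2)
  have hg : ∀ j, g j = m j - S := by
    intro j
    have h1 : g j = (∑ k ∈ Finset.univ.erase kstar,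
          (if j = k then (1:ℝ) else 0) * (m k - m kstar))
        - ∑ k ∈ Finset.univ.erase kstar, p k * (m k - m kstar) := by
      rw [hgdef, ← Finset.sum_sub_distrib]
      exact Finset.sum_congr rfl fun k _ => by ring
    have h2 : (∑ k ∈ Finset.univ.erase kstar,
        (if j = k then (1:ℝ) else 0) * (m k - m kstar)) = m j - m kstar := by
      simp only [ite_mul, one_mul, zero_mul, Finset.sum_ite_eq]
      by_cases hj : j = kstar
      · simp [hj]
      · simp [Finset.mem_erase, hj]
    have h3 : (∑ k ∈ Finset.univ.erase kstar, p k * (m k - m kstar)) = S - m kstar := by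
      rw [Finset.sum_erase_eq_sub (Finset.mem_univ kstar)]
      have : (∑ k, p k * (m k - m kstar)) = S - m kstar := by
        have : (∑ k, p k * (m k - m kstar)) = (∑ k, p k * m k) - (∑ k, p k) * m kstar := by
          rw [Finset.sum_mul, ← Finset.sum_sub_distrib]
          exact Finset.sum_congr rfl fun k _ => by ring
        rw [this, hsum1, ← hS]; ring
      rw [this]; ring
    rw [h1, h2, h3]; ring
  have hexp : ∑ j, p j * (g j) ^ 2 = (∑ j, p j * m j ^ 2) - S ^ 2 := by
    have h1 : ∀ j, p j * (g j) ^ 2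
        = p j * m j ^ 2 - (2 * S) * (p j * m j) + S ^ 2 * p j := by
      intro j; rw [hg j]; ring
    simp only [h1]
    rw [Finset.sum_add_distrib, Finset.sum_sub_distrib, ← Finset.mul_sum, ← Finset.mul_sum,
      hsum1, ← hS]
    ring
  -- final algebra
  rw [hVarY, hEY, hRint, hexp]
  have e2 : ∑ k, p k * (v k + m k ^ 2) = (∑ k, p k * v k) + ∑ k, p k * m k ^ 2 := by
    rw [← Finset.sum_add_distrib]; exact Finset.sum_congr rfl fun k _ => by ring
  have e3 : ∑ k, p k * (v k - lam * m k) = (∑ k, p k * v k) - lam * S := by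
    rw [hS, Finset.mul_sum, ← Finset.sum_sub_distrib]
    exact Finset.sum_congr rfl fun k _ => by ring
  rw [e2, e3]; ring
end

section
/- For any full-information policy π on 2 actions and any horizon T ≥ 100, there exists an assignment 𝓕 = (f_1, f_2) of reward distributions to the two actions such that the risk-averse regret satisfies R_π(T) ≥ T/(4e). -/
open MeasureTheory ProbabilityTheory Finset



open scoped ENNReal

noncomputable def wcM (T : ℕ) : ℝ := Real.sqrt (2 * T)

noncomputable def wcNu (T : ℕ) : Measure ℝ :=
  (1 - (T : ℝ≥0∞)⁻¹) • Measure.dirac 0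
    + (2 * T : ℝ≥0∞)⁻¹ • Measure.dirac (wcM T)
    + (2 * T : ℝ≥0∞)⁻¹ • Measure.dirac (-(wcM T))

lemma wcM_pos {T : ℕ} (hT : 1 ≤ T) : 0 < wcM T := by
  have h : (0:ℝ) < 2 * T := by
    have : (1:ℝ) ≤ T := by exact_mod_cast hT
    nlinarith
  exact Real.sqrt_pos.2 h

lemma wcM_sq {T : ℕ} : wcM T ^ 2 = 2 * T := by
  rw [wcM, Real.sq_sqrt] ; positivity

instance wcNu_prob (T : ℕ) [NeZero T] : IsProbabilityMeasure (wcNu T) := by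
  constructor
  simp only [wcNu, Measure.add_apply, Measure.smul_apply, measure_univ, smul_eq_mul, mul_one]
  have h2 : (2 * T : ℝ≥0∞)⁻¹ + (2 * T : ℝ≥0∞)⁻¹ = (T : ℝ≥0∞)⁻¹ := by
    rw [ENNReal.mul_inv (Or.inl (by norm_num)) (Or.inl (by norm_num))]
    rw [← two_mul, ← mul_assoc, ENNReal.mul_inv_cancel (by norm_num) (by norm_num), one_mul]
  rw [add_assoc, h2, tsub_add_cancel_of_le]
  exact ENNReal.inv_le_one.2 (by exact_mod_cast Nat.one_le_iff_ne_zero.2 (NeZero.ne T))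

lemma integrable_dirac' {f : ℝ → ℝ} (hf : Measurable f) (x : ℝ) :
    Integrable f (Measure.dirac x) := by
  refine ⟨hf.aestronglyMeasurable, ?_⟩
  rw [HasFiniteIntegral, lintegral_dirac' x (by fun_prop)]
  exact ENNReal.coe_lt_top

lemma wcNu_coef_ne_top (T : ℕ) [NeZero T] :
    (1 - (T : ℝ≥0∞)⁻¹ ≠ ∞) ∧ ((2 * T : ℝ≥0∞)⁻¹ ≠ ∞) := by
  constructor
  · exact (tsub_le_self.trans_lt ENNReal.one_lt_top).ne
  · refine ENNReal.inv_ne_top.2 ?_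
    have : (T : ℝ≥0∞) ≠ 0 := by exact_mod_cast (NeZero.ne T)
    simp [this]

lemma wcNu_integrable {T : ℕ} [NeZero T] {f : ℝ → ℝ} (hf : Measurable f) :
    Integrable f (wcNu T) :=
  Integrable.add_measure
    (Integrable.add_measure
      ((integrable_dirac' hf _).smul_measure (wcNu_coef_ne_top T).1)
      ((integrable_dirac' hf _).smul_measure (wcNu_coef_ne_top T).2))
    ((integrable_dirac' hf _).smul_measure (wcNu_coef_ne_top T).2)

lemma wcNu_integral {T : ℕ} (hT : 1 ≤ T) {f : ℝ → ℝ} (hf : Measurable f) :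
    ∫ x, f x ∂(wcNu T) =
      (1 - (T:ℝ)⁻¹) * f 0 + (2*T:ℝ)⁻¹ * f (wcM T) + (2*T:ℝ)⁻¹ * f (-(wcM T)) := by
  haveI : NeZero T := ⟨by omega⟩
  have hTne : (T : ℝ≥0∞) ≠ 0 := by exact_mod_cast (NeZero.ne T)
  have h1 : Integrable f ((1 - (T : ℝ≥0∞)⁻¹) • Measure.dirac (0:ℝ)) :=
    (integrable_dirac' hf _).smul_measure (wcNu_coef_ne_top T).1
  have h2 : Integrable f ((2 * T : ℝ≥0∞)⁻¹ • Measure.dirac (wcM T)) :=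
    (integrable_dirac' hf _).smul_measure (wcNu_coef_ne_top T).2
  have h3 : Integrable f ((2 * T : ℝ≥0∞)⁻¹ • Measure.dirac (-(wcM T))) :=
    (integrable_dirac' hf _).smul_measure (wcNu_coef_ne_top T).2
  rw [wcNu, integral_add_measure (h1.add_measure h2) h3, integral_add_measure h1 h2]
  simp only [integral_smul_measure, integral_dirac, smul_eq_mul]
  have e1 : (1 - (T : ℝ≥0∞)⁻¹).toReal = 1 - (T:ℝ)⁻¹ := by
    rw [ENNReal.toReal_sub_of_le (ENNReal.inv_le_one.2 (by exact_mod_cast hT)) ENNReal.one_ne_top]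
    simp
  have e2 : ((2 * T : ℝ≥0∞)⁻¹).toReal = (2*T:ℝ)⁻¹ := by
    rw [ENNReal.toReal_inv]
    norm_num
  rw [e1, e2]

lemma wcNu_mean {T : ℕ} (hT : 1 ≤ T) : ∫ x, x ∂(wcNu T) = 0 := by
  rw [show (fun x : ℝ => x) = id from rfl, wcNu_integral hT measurable_id]
  simp [id]

lemma wcNu_sq {T : ℕ} (hT : 1 ≤ T) : ∫ x, x^2 ∂(wcNu T) = 2 := by
  rw [wcNu_integral hT (by fun_prop)]
  have h : (2*T:ℝ) ≠ 0 := by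
    have : (1:ℝ) ≤ T := by exact_mod_cast hT
    nlinarith
  field_simp [wcM_sq]
  rw [wcM_sq]; ring

lemma wcNu_zero {T : ℕ} (hT : 1 ≤ T) : wcNu T {0} = 1 - (T : ℝ≥0∞)⁻¹ := by
  have hM : wcM T ≠ 0 := (wcM_pos hT).ne'
  have hM2 : -(wcM T) ≠ 0 := by simpa using hM
  simp [wcNu, Measure.dirac_apply' _ (measurableSet_singleton (0:ℝ)),
    Set.indicator_apply, hM, hM2]

lemma wcNu_bound {T : ℕ} (hT : 1 ≤ T) : wcNu T {x : ℝ | wcM T < |x|} = 0 := by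
  have hs : MeasurableSet {x : ℝ | wcM T < |x|} := by
    apply measurableSet_lt <;> fun_prop
  have hM : (0:ℝ) ≤ wcM T := (wcM_pos hT).le
  simp [wcNu, Measure.dirac_apply' _ hs, Set.indicator_apply, Set.mem_setOf_eq,
    abs_of_nonneg hM, not_lt.2 hM, abs_of_nonpos (neg_nonpos.2 hM)]

lemma variance_congr_ae {Ω : Type*} {m : MeasurableSpace Ω} {μ : Measure Ω} {f g : Ω → ℝ}
    (h : f =ᵐ[μ] g) : variance f μ = variance g μ := by
  unfold ProbabilityTheory.variance ProbabilityTheory.evariance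
  rw [integral_congr_ae h]
  congr 1
  apply lintegral_congr_ae
  filter_upwards [h] with ω hω
  rw [hω]

lemma wc_exp_bound {T : ℕ} (hT : 2 ≤ T) : Real.exp (-2) ≤ (1 - (T:ℝ)⁻¹) ^ T := by
  have hT2 : (2:ℝ) ≤ T := by exact_mod_cast hT
  have hTpos : (0:ℝ) < T := by linarith
  set x : ℝ := (T:ℝ)⁻¹ with hx
  have hx0 : 0 < x := by positivity
  have hx2 : x ≤ 1/2 := by
    rw [hx, show (1:ℝ)/2 = (2:ℝ)⁻¹ by norm_num]
    exact inv_anti₀ (by norm_num) hT2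
  have h1 : 1 + 2*x ≤ Real.exp (2*x) := by
    have := Real.add_one_le_exp (2*x); linarith
  have hkey : Real.exp (-(2*x)) ≤ 1 - x := by
    have hev : Real.exp (-(2*x)) * Real.exp (2*x) = 1 := by
      rw [← Real.exp_add]; simp
    have hepos : (0:ℝ) < Real.exp (2*x) := Real.exp_pos _
    nlinarith [Real.exp_pos (-(2*x))]
  have hpow := pow_le_pow_left₀ (Real.exp_nonneg _) hkey T
  have hxT : x * T = 1 := by
    rw [hx]; field_simp
  rw [← Real.exp_nat_mul] at hpow
  have : (T:ℝ) * -(2*x) = -2 := by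
    have : (T:ℝ) * x = 1 := by linarith [hxT]
    nlinarith
  rwa [this] at hpow

lemma wc_exp_final : 1/(4*Real.exp 1) ≤ Real.exp (-2) := by
  have he : (0:ℝ) < Real.exp 1 := Real.exp_pos 1
  have he4 : Real.exp 1 < 4 := lt_trans Real.exp_one_lt_d9 (by norm_num)
  have h2 : Real.exp (-2) * (Real.exp 1)^2 = 1 := by
    rw [← Real.exp_nat_mul]
    rw [← Real.exp_add]
    norm_num
  rw [div_le_iff₀ (by positivity)]
  nlinarith [Real.exp_pos (-2)]

/-- **Theorem 2: an `Ω(T)` worst-case regret lower bound.** For any full-information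
policy `π` on 2 actions and any horizon `T ≥ 100`, there exists an assignment
`𝓕 = (f₁, f₂)` of reward distributions to the two actions such that the risk-averse
regret satisfies `R_π(T) ≥ T/(4e)`. Actions are indexed by `Fin 2`; the decision at
round `t ∈ {0, …, T−1}` applies `π t` to the rewards of both actions in the `t`
previous rounds; `MV(X) = Var(X) − λ·E[X]` and
`R_π(T) = Σ_{t<T} MV(X_{π_t,t}) − T·MV_{k*}`, `k*` being the action of minimal
mean-variance. -/
theorem worst_case_regret_linear_lower_bound
    (lam : ℝ) (hlam : 0 ≤ lam)
    (T : ℕ) (hT : 100 ≤ T)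
    (π : (t : ℕ) → (Fin t → ℝ × ℝ) → Fin 2)
    (hπ : ∀ t, Measurable (π t)) :
    ∃ f : Fin 2 → Measure ℝ, (∀ k, IsProbabilityMeasure (f k)) ∧
      ∀ (Ω : Type) (_ : MeasurableSpace Ω) (P : Measure Ω),
        IsProbabilityMeasure P →
        ∀ (X : Fin 2 → ℕ → Ω → ℝ),
        (∀ k t, Measurable (X k t)) →
        -- rewards i.i.d. over time and independent across actions ...
        iIndepFun (fun p : Fin 2 × ℕ => X p.1 p.2) P →
        -- ... with action `k`'s rewards distributed according to `f k`
        (∀ k t, Measure.map (X k t) P = f k) →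
        (∑ t ∈ Finset.range T,
            (variance (fun ω => X (π t (fun s => (X 0 s.1 ω, X 1 s.1 ω))) t ω) P
              - lam * ∫ ω, X (π t (fun s => (X 0 s.1 ω, X 1 s.1 ω))) t ω ∂P))
          - T * min (variance id (f 0) - lam * ∫ x, x ∂(f 0))
                    (variance id (f 1) - lam * ∫ x, x ∂(f 1))
          ≥ T / (4 * Real.exp 1) := by
  classical
  haveI : NeZero T := ⟨by omega⟩
  have hT1 : 1 ≤ T := by omega
  have h01 : ∀ x : Fin 2, x = 0 ∨ x = 1 := by decide
  set a : ℕ → Fin 2 := fun t => π t (fun _ => ((0:ℝ),(0:ℝ))) with ha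
  set i : Fin 2 :=
    if T ≤ 2 * ((Finset.range T).filter (fun t => a t = 0)).card then 0 else 1 with hidef
  set oi : Fin 2 := if i = 0 then 1 else 0 with hoidef
  have hoi_ne : oi ≠ i := by
    rcases h01 i with h | h <;> simp [hoidef, h]
  have hcases : ∀ k : Fin 2, k = i ∨ k = oi := by
    intro k
    rcases h01 i with h | h <;> rcases h01 k with h' | h' <;> simp [hoidef, h, h']
  -- majority count
  have hmaj : T ≤ 2 * ((Finset.range T).filter (fun t => a t = i)).card := by
    have hsplit := Finset.card_filter_add_card_filter_not
      (s := Finset.range T) (p := fun t => a t = 0)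
    have hneg : (Finset.range T).filter (fun t => ¬ a t = 0)
        = (Finset.range T).filter (fun t => a t = 1) := by
      apply Finset.filter_congr
      intro t _
      rcases h01 (a t) with h | h <;> simp [h]
    rw [hneg, Finset.card_range] at hsplit
    by_cases hch : T ≤ 2 * ((Finset.range T).filter (fun t => a t = 0)).card
    · have : i = 0 := by rw [hidef, if_pos hch]
      rw [this]; exact hch
    · have : i = 1 := by rw [hidef, if_neg hch]
      rw [this]; omega
  set f : Fin 2 → Measure ℝ := fun k => if k = i then wcNu T else Measure.dirac 0 with hfdef
  have hfi : f i = wcNu T := by rw [hfdef]; simp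
  have hfne : ∀ k, k ≠ i → f k = Measure.dirac 0 := fun k h => by rw [hfdef]; simp [h]
  refine ⟨f, fun k => ?_, ?_⟩
  · by_cases h : k = i
    · rw [h, hfi]; exact wcNu_prob T
    · rw [hfne k h]; infer_instance
  intro Ω mΩ P hP X hXm hindep hmap
  have hmapi : ∀ t, Measure.map (X i t) P = wcNu T := fun t => by
    rw [hmap i t, hfi]
  have hmapoi : ∀ t, Measure.map (X oi t) P = Measure.dirac 0 := fun t => by
    rw [hmap oi t, hfne oi hoi_ne]
  have hXsafe : ∀ t, ∀ᵐ ω ∂P, X oi t ω = 0 := by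
    intro t
    rw [ae_iff]
    have hpre : {ω | ¬ X oi t ω = 0} = X oi t ⁻¹' ({0}ᶜ) := by
      ext ω; simp
    rw [hpre, ← Measure.map_apply (hXm oi t) (measurableSet_singleton (0:ℝ)).compl,
      hmapoi t, Measure.dirac_apply' _ (measurableSet_singleton (0:ℝ)).compl]
    simp
  have hbound : ∀ k t, ∀ᵐ ω ∂P, |X k t ω| ≤ wcM T := by
    intro k t
    rw [ae_iff]
    have hs : MeasurableSet {x : ℝ | wcM T < |x|} := by
      apply measurableSet_lt <;> fun_prop
    have hpre : {ω | ¬ |X k t ω| ≤ wcM T} = X k t ⁻¹' {x : ℝ | wcM T < |x|} := by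
      ext ω; simp
    rw [hpre, ← Measure.map_apply (hXm k t) hs, hmap k t]
    by_cases h : k = i
    · rw [h, hfi]; exact wcNu_bound hT1
    · rw [hfne k h, Measure.dirac_apply' _ hs]
      simp [Set.indicator_apply, Set.mem_setOf_eq, not_lt.2 (by simpa using (wcM_pos hT1).le)]
  have hYint : ∀ t, Integrable (X i t) P := by
    intro t
    have h : Integrable (fun x : ℝ => x) (Measure.map (X i t) P) := by
      rw [hmapi t]; exact wcNu_integrable measurable_id
    exact (integrable_map_measure measurable_id.aestronglyMeasurable
      (hXm i t).aemeasurable).mp h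
  have hY2int : ∀ t, Integrable (fun ω => X i t ω ^ 2) P := by
    intro t
    have h : Integrable (fun x : ℝ => x ^ 2) (Measure.map (X i t) P) := by
      rw [hmapi t]; exact wcNu_integrable (by fun_prop)
    exact (integrable_map_measure (by fun_prop) (hXm i t).aemeasurable).mp h
  have hYmean : ∀ t, ∫ ω, X i t ω ∂P = 0 := by
    intro t
    have h := integral_map (μ := P) (φ := X i t) (f := fun x : ℝ => x)
      (hXm i t).aemeasurable measurable_id.aestronglyMeasurable
    rw [hmapi t, wcNu_mean hT1] at h
    exact h.symm
  have hY2 : ∀ t, ∫ ω, X i t ω ^ 2 ∂P = 2 := by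
    intro t
    have h := integral_map (μ := P) (φ := X i t) (f := fun x : ℝ => x ^ 2)
      (hXm i t).aemeasurable (by fun_prop)
    rw [hmapi t, wcNu_sq hT1] at h
    exact h.symm
  -- the "all dangerous rewards are zero" event
  set Gset : Set Ω := ⋂ s ∈ Finset.range T, X i s ⁻¹' ({0} : Set ℝ) with hGdef
  have hGval : P Gset = (1 - (T : ℝ≥0∞)⁻¹) ^ T := by
    have hprod := hindep.measure_inter_preimage_eq_mul
      (S := (Finset.range T).image (fun s => ((i, s) : Fin 2 × ℕ)))
      (sets := fun _ => ({0} : Set ℝ)) (fun _ _ => measurableSet_singleton 0)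
    have hinj : Set.InjOn (fun s => ((i, s) : Fin 2 × ℕ)) (Finset.range T) := by
      intro x _ y _ h
      simpa using h
    have hset : (⋂ p ∈ (Finset.range T).image (fun s => ((i, s) : Fin 2 × ℕ)),
        (fun q : Fin 2 × ℕ => X q.1 q.2) p ⁻¹' ({0} : Set ℝ)) = Gset := by
      ext ω
      simp [hGdef, Finset.mem_image]
    rw [hset, Finset.prod_image (fun x hx y hy h => hinj hx hy h)] at hprod
    have hfac : ∀ s ∈ Finset.range T,
        P ((fun q : Fin 2 × ℕ => X q.1 q.2) (i, s) ⁻¹' ({0} : Set ℝ))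
          = 1 - (T : ℝ≥0∞)⁻¹ := by
      intro s _
      show P (X i s ⁻¹' {0}) = _
      rw [← Measure.map_apply (hXm i s) (measurableSet_singleton (0:ℝ)), hmapi s]
      exact wcNu_zero hT1
    rw [Finset.prod_congr rfl hfac, Finset.prod_const, Finset.card_range] at hprod
    exact hprod
  set r : ℝ := (1 - (T:ℝ)⁻¹) ^ T with hrdef
  have hrval : (P Gset).toReal = r := by
    rw [hGval, ENNReal.toReal_pow, hrdef]
    congr 1
    rw [ENNReal.toReal_sub_of_le (ENNReal.inv_le_one.2 (by exact_mod_cast hT1))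
      ENNReal.one_ne_top]
    simp
  have hr0 : 0 ≤ r := by rw [← hrval]; exact ENNReal.toReal_nonneg
  have hrexp : Real.exp (-2) ≤ r := wc_exp_bound (by omega)
  have hallsafe : ∀ᵐ ω ∂P, ∀ s, s < T → X oi s ω = 0 := by
    rw [ae_all_iff]
    intro s
    by_cases hs : s < T
    · filter_upwards [hXsafe s] with ω h _
      exact h
    · filter_upwards with ω h
      omega
  have hterm : ∀ t ∈ Finset.range T,
      (if a t = i then 2 * r else 0)
        ≤ variance (fun ω => X (π t (fun s => (X 0 s.1 ω, X 1 s.1 ω))) t ω) P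
          - lam * ∫ ω, X (π t (fun s => (X 0 s.1 ω, X 1 s.1 ω))) t ω ∂P := by
    intro t htmem
    have ht : t < T := Finset.mem_range.mp htmem
    set A : Ω → Fin 2 := fun ω => π t (fun s => (X 0 s.1 ω, X 1 s.1 ω)) with hAdef
    have hHmeas : Measurable (fun ω => (fun s : Fin t => (X 0 s.1 ω, X 1 s.1 ω))) :=
      measurable_pi_lambda _ fun s => (hXm 0 s.1).prodMk (hXm 1 s.1)
    have hAmeas : Measurable A := (hπ t).comp hHmeas
    set B : Set Ω := A ⁻¹' {i} with hBdef
    have hB : MeasurableSet B := hAmeas (measurableSet_singleton i)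
    set g : Ω → ℝ := B.indicator (fun _ => (1:ℝ)) with hgdef
    have hgmeas : Measurable g := measurable_const.indicator hB
    set p : ℝ := (P B).toReal with hpdef
    have hp0 : 0 ≤ p := ENNReal.toReal_nonneg
    -- independence of g and X i t
    have hGY : IndepFun g (X i t) P := by
      classical
      set S : Finset (Fin 2 × ℕ) := (Finset.univ : Finset (Fin 2)) ×ˢ Finset.range t with hSdef
      set Tf : Finset (Fin 2 × ℕ) := {(i, t)} with hTfdef
      have hdisj : Disjoint S Tf := by
        simp [hSdef, hTfdef, Finset.disjoint_singleton_right, Finset.mem_product]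
      have hbase := hindep.indepFun_finset S Tf hdisj (fun q => hXm q.1 q.2)
      have hmem : ∀ (k : Fin 2) (s : Fin t), ((k, (s.1 : ℕ)) : Fin 2 × ℕ) ∈ S := fun k s =>
        Finset.mem_product.2 ⟨Finset.mem_univ _, Finset.mem_range.2 s.isLt⟩
      set ψ : (S → ℝ) → (Fin t → ℝ × ℝ) := fun v s =>
        (v ⟨(0, s.1), hmem 0 s⟩, v ⟨(1, s.1), hmem 1 s⟩) with hψdef
      have hψ : Measurable ψ :=
        measurable_pi_lambda _ fun s =>
          (measurable_pi_apply _).prodMk (measurable_pi_apply _)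
      set ind : (Fin t → ℝ × ℝ) → ℝ := ((π t) ⁻¹' {i}).indicator (fun _ => (1:ℝ))
        with hinddef
      have hindmeas : Measurable ind :=
        measurable_const.indicator ((hπ t) (measurableSet_singleton i))
      set φR : (Tf → ℝ) → ℝ := fun v => v ⟨(i, t), Finset.mem_singleton_self _⟩ with hφRdef
      have hφR : Measurable φR := measurable_pi_apply _
      have hcomp := hbase.comp (hindmeas.comp hψ) hφR
      have heq1 : ((ind ∘ ψ) ∘ fun ω (q : S) => X (q : Fin 2 × ℕ).1 (q : Fin 2 × ℕ).2 ω)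
          = g := by
        funext ω
        simp only [Function.comp_apply, hψdef, hinddef, hgdef, Set.indicator_apply,
          Set.mem_preimage, Set.mem_singleton_iff, hBdef, hAdef]
      have heq2 : (φR ∘ fun ω (q : Tf) => X (q : Fin 2 × ℕ).1 (q : Fin 2 × ℕ).2 ω)
          = X i t := rfl
      rw [heq1, heq2] at hcomp
      exact hcomp
    have hGY2 : IndepFun g (fun ω => X i t ω ^ 2) P :=
      hGY.comp measurable_id (measurable_id.pow_const 2)
    have hgint : Integrable g P := (integrable_const (1:ℝ)).indicator hB
    have hgval : ∫ ω, g ω ∂P = p := by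
      rw [hgdef]
      rw [integral_indicator_const (1:ℝ) hB]
      simp [hpdef]
      rfl
    have hmul1 : ∫ ω, g ω * X i t ω ∂P = 0 := by
      have h := hGY.integral_fun_mul_eq_mul_integral hgint.aestronglyMeasurable (hYint t).aestronglyMeasurable
      rw [hgval, hYmean t, mul_zero] at h
      exact h
    have hmul2 : ∫ ω, g ω * X i t ω ^ 2 ∂P = p * 2 := by
      have h := hGY2.integral_fun_mul_eq_mul_integral hgint.aestronglyMeasurable (hY2int t).aestronglyMeasurable
      rw [hgval, hY2 t] at h
      exact h
    -- the chosen reward coincides a.e. with g * X i t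
    have hCae : (fun ω => X (A ω) t ω) =ᵐ[P] fun ω => g ω * X i t ω := by
      filter_upwards [hXsafe t] with ω hω
      by_cases hA : A ω = i
      · have hgω : g ω = 1 := by
          simp [hgdef, Set.indicator_apply, hBdef, Set.mem_preimage, hA]
        rw [hA, hgω, one_mul]
      · have hAoi : A ω = oi := (hcases (A ω)).resolve_left hA
        have hgω : g ω = 0 := by
          simp [hgdef, Set.indicator_apply, hBdef, Set.mem_preimage, hA]
        rw [hAoi, hgω, zero_mul, hω]
    have hml : MemLp (fun ω => g ω * X i t ω) 2 P := by
      refine MemLp.of_bound ((hgmeas.mul (hXm i t)).aestronglyMeasurable) (wcM T) ?_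
      filter_upwards [hbound i t] with ω hb
      have hg1 : |g ω| ≤ 1 := by
        by_cases h : ω ∈ B <;> simp [hgdef, Set.indicator_apply, h]
      calc ‖g ω * X i t ω‖ = |g ω| * |X i t ω| := by rw [Real.norm_eq_abs, abs_mul]
        _ ≤ 1 * wcM T := mul_le_mul hg1 hb (abs_nonneg _) one_pos.le
        _ = wcM T := one_mul _
    have hvar : variance (fun ω => X (A ω) t ω) P = 2 * p := by
      rw [variance_congr_ae hCae, variance_eq_sub hml]
      have e1 : ∫ ω, ((fun ω => g ω * X i t ω) ^ 2) ω ∂P = ∫ ω, g ω * X i t ω ^ 2 ∂P := by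
        apply integral_congr_ae
        apply Filter.Eventually.of_forall
        intro ω
        by_cases h : ω ∈ B <;> simp [Pi.pow_apply, hgdef, Set.indicator_apply, h] <;> ring
      rw [e1, hmul2, integral_congr_ae (Filter.EventuallyEq.refl _ _)]
      rw [hmul1]
      ring
    have hEC : ∫ ω, X (A ω) t ω ∂P = 0 := by
      rw [integral_congr_ae hCae, hmul1]
    -- lower bound for p
    have hpbound : a t = i → r ≤ p := by
      intro hat
      have hsub : ∀ᵐ ω ∂P, ω ∈ Gset → ω ∈ B := by
        filter_upwards [hallsafe] with ω hsafe hG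
        have hH : (fun s : Fin t => (X 0 s.1 ω, X 1 s.1 ω)) = fun _ => ((0:ℝ), (0:ℝ)) := by
          funext s
          have hsT : (s.1 : ℕ) < T := lt_trans s.isLt ht
          have h0 : X i s.1 ω = 0 := by
            rw [hGdef] at hG
            simp only [Set.mem_iInter, Set.mem_preimage, Set.mem_singleton_iff] at hG
            exact hG s.1 (Finset.mem_range.2 hsT)
          have h1 : X oi s.1 ω = 0 := hsafe s.1 hsT
          have c0 : X 0 s.1 ω = 0 := by
            rcases hcases 0 with h | h <;> rw [h] <;> assumption
          have c1 : X 1 s.1 ω = 0 := by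
            rcases hcases 1 with h | h <;> rw [h] <;> assumption
          rw [c0, c1]
        show A ω = i
        rw [hAdef]
        show π t (fun s : Fin t => (X 0 s.1 ω, X 1 s.1 ω)) = i
        rw [hH]
        exact hat
      have hnull : P (Gset \ B) = 0 := by
        rw [ae_iff] at hsub
        refine measure_mono_null (fun ω hω => ?_) hsub
        simp only [Set.mem_setOf_eq]
        intro hcontra
        exact hω.2 (hcontra hω.1)
      have hle : P Gset ≤ P B := measure_mono_ae (MeasureTheory.ae_le_set.2 hnull)
      rw [← hrval, hpdef]
      exact ENNReal.toReal_mono (measure_ne_top P B) hle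
    -- conclude
    show (if a t = i then 2 * r else 0)
        ≤ variance (fun ω => X (A ω) t ω) P - lam * ∫ ω, X (A ω) t ω ∂P
    rw [hvar, hEC, mul_zero, sub_zero]
    by_cases hat : a t = i
    · rw [if_pos hat]
      have := hpbound hat
      linarith
    · rw [if_neg hat]
      linarith
  -- the min term is at most 0
  have hdirMV : variance id (Measure.dirac (0:ℝ)) - lam * ∫ x, x ∂(Measure.dirac (0:ℝ)) = 0 := by
    have hm : MemLp (id : ℝ → ℝ) 2 (Measure.dirac (0:ℝ)) := by
      refine MemLp.of_bound measurable_id.aestronglyMeasurable 0 ?_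
      rw [MeasureTheory.ae_dirac_eq]
      simp
    rw [variance_eq_sub hm]
    rw [integral_dirac, integral_dirac]
    simp
  have hminle : min (variance id (f 0) - lam * ∫ x, x ∂(f 0))
      (variance id (f 1) - lam * ∫ x, x ∂(f 1)) ≤ 0 := by
    rcases h01 oi with h | h
    · have hf0 : f 0 = Measure.dirac 0 := hfne 0 (h ▸ hoi_ne)
      calc min _ _ ≤ variance id (f 0) - lam * ∫ x, x ∂(f 0) := min_le_left _ _
        _ = 0 := by rw [hf0]; exact hdirMV
    · have hf1 : f 1 = Measure.dirac 0 := hfne 1 (h ▸ hoi_ne)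
      calc min _ _ ≤ variance id (f 1) - lam * ∫ x, x ∂(f 1) := min_le_right _ _
        _ = 0 := by rw [hf1]; exact hdirMV
  -- sum lower bound
  have hsumle := Finset.sum_le_sum hterm
  have hsumite : ∑ t ∈ Finset.range T, (if a t = i then 2*r else 0)
      = (((Finset.range T).filter fun t => a t = i).card : ℝ) * (2*r) := by
    rw [← Finset.sum_filter, Finset.sum_const, nsmul_eq_mul]
  have hcard : (T:ℝ) ≤ 2 * (((Finset.range T).filter fun t => a t = i).card : ℝ) := by
    exact_mod_cast hmaj
  have hTpos : (0:ℝ) ≤ T := Nat.cast_nonneg T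
  have h1 : (T:ℝ) * r ≤ ∑ t ∈ Finset.range T,
      (variance (fun ω => X (π t (fun s => (X 0 s.1 ω, X 1 s.1 ω))) t ω) P
        - lam * ∫ ω, X (π t (fun s => (X 0 s.1 ω, X 1 s.1 ω))) t ω ∂P) := by
    calc (T:ℝ) * r ≤ (2 * (((Finset.range T).filter fun t => a t = i).card : ℝ)) * r :=
          mul_le_mul_of_nonneg_right hcard hr0
      _ = (((Finset.range T).filter fun t => a t = i).card : ℝ) * (2*r) := by ring
      _ = ∑ t ∈ Finset.range T, (if a t = i then 2*r else 0) := hsumite.symm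
      _ ≤ _ := hsumle
  have h2 : (T:ℝ) / (4 * Real.exp 1) ≤ (T:ℝ) * r := by
    have hr4 : 1 / (4 * Real.exp 1) ≤ r := le_trans wc_exp_final hrexp
    calc (T:ℝ) / (4 * Real.exp 1) = (T:ℝ) * (1 / (4 * Real.exp 1)) := by ring
      _ ≤ (T:ℝ) * r := mul_le_mul_of_nonneg_left hr4 hTpos
  have h3 : (T:ℝ) * min (variance id (f 0) - lam * ∫ x, x ∂(f 0))
      (variance id (f 1) - lam * ∫ x, x ∂(f 1)) ≤ 0 :=
    mul_nonpos_of_nonneg_of_nonpos hTpos hminle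
  linarith
end

section
/- For any policy π in the risk-averse online learning setup, R_π(T) ≤ Σ_{k=1}^K E[τ_{k,T}]·Γ_k + (K−1)·Σ_{k∈[K]\{k*}} Σ_{t=1}^T min( Pr[π_t = k], 1/4 )·Δ_k². -/
open MeasureTheory ProbabilityTheory Finset

section aux

lemma alg_key' {K : ℕ} (hK : 0 < K) (kstar : Fin K) (p d : Fin K → ℝ)
    (hp0 : ∀ k, 0 ≤ p k) (hp1 : ∑ k, p k = 1) (hd : d kstar = 0) :
    (∑ k, p k * d k ^ 2) - (∑ k, p k * d k) ^ 2
      ≤ ((K : ℝ) - 1) * ∑ k ∈ Finset.univ.erase kstar, min (p k) (1/4) * d k ^ 2 := by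
  classical
  set E := (Finset.univ.erase kstar) with hE
  set q : Fin K → ℝ := fun k => min (p k) (1/4) with hq
  set c : Fin K → ℝ := fun k => q k * d k ^ 2 with hc
  have hple1 : ∀ k, p k ≤ 1 := by
    intro k
    calc p k ≤ ∑ j, p j := Finset.single_le_sum (fun j _ => hp0 j) (mem_univ k)
    _ = 1 := hp1
  have hpair : ∀ k j : Fin K, k ≠ j → p k + p j ≤ 1 := by
    intro k j hkj
    have : ∑ i ∈ ({k, j} : Finset (Fin K)), p i ≤ ∑ i, p i :=
      Finset.sum_le_sum_of_subset_of_nonneg (Finset.subset_univ _) (fun i _ _ => hp0 i)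
    rwa [Finset.sum_pair hkj, hp1] at this
  have hq0 : ∀ k, 0 ≤ q k := fun k => le_min (hp0 k) (by norm_num)
  have hc0 : ∀ k, 0 ≤ c k := fun k => mul_nonneg (hq0 k) (sq_nonneg _)
  have hdiag : ∀ k, p k * (1 - p k) ≤ q k := by
    intro k
    refine le_min ?_ (by nlinarith [sq_nonneg (p k - 1/2)])
    nlinarith [hp0 k, hple1 k]
  have hcross : ∀ k j : Fin K, k ≠ j → p k * p j ≤ q k := by
    intro k j hkj
    refine le_min ?_ ?_
    · nlinarith [hp0 k, hple1 j]
    · nlinarith [hpair k j hkj, hp0 k, hp0 j, sq_nonneg (p k - p j)]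
  -- restrict sums to E
  have h1 : ∑ k, p k * d k ^ 2 = ∑ k ∈ E, p k * d k ^ 2 := by
    rw [hE]; rw [Finset.sum_erase _ (by simp [hd])]
  have h2 : ∑ k, p k * d k = ∑ k ∈ E, p k * d k := by
    rw [hE]; rw [Finset.sum_erase _ (by simp [hd])]
  rw [h1, h2]
  set G := ∑ k ∈ E, c k with hG
  have hGnn : 0 ≤ G := Finset.sum_nonneg fun k _ => hc0 k
  have hcard : (E.card : ℝ) = (K : ℝ) - 1 := by
    have : E.card = K - 1 := by
      rw [hE, Finset.card_erase_of_mem (mem_univ _)]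
      simp
    rw [this, Nat.cast_sub hK, Nat.cast_one]
  -- expand the square
  have hsq : (∑ k ∈ E, p k * d k) ^ 2
      = ∑ k ∈ E, ∑ j ∈ E, (p k * d k) * (p j * d j) := by
    rw [sq, Finset.sum_mul_sum]
  rw [hsq, ← Finset.sum_sub_distrib]
  -- per-k bound
  have key : ∀ k ∈ E, p k * d k ^ 2 - ∑ j ∈ E, (p k * d k) * (p j * d j)
      ≤ c k + ∑ j ∈ E.erase k, (c k + c j) / 2 := by
    intro k hkE
    have hsplit : ∑ j ∈ E, (p k * d k) * (p j * d j)
        = (p k * d k) * (p k * d k) + ∑ j ∈ E.erase k, (p k * d k) * (p j * d j) :=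
      (Finset.add_sum_erase E _ hkE).symm
    rw [hsplit]
    have hterm : ∀ j ∈ E.erase k, -((p k * d k) * (p j * d j)) ≤ (c k + c j) / 2 := by
      intro j hj
      have hkj : k ≠ j := (Finset.ne_of_mem_erase hj).symm
      have h1 : p k * p j ≤ q k := hcross k j hkj
      have h2 : p k * p j ≤ q j := by
        rw [mul_comm]; exact hcross j k hkj.symm
      have hpp : 0 ≤ p k * p j := mul_nonneg (hp0 k) (hp0 j)
      have habs : -((p k * d k) * (p j * d j)) ≤ (p k * p j) * (d k ^2 + d j ^2) / 2 := by
        nlinarith [sq_nonneg (d k + d j), sq_nonneg (d k - d j)]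
      calc -((p k * d k) * (p j * d j)) ≤ (p k * p j) * (d k ^2 + d j ^2) / 2 := habs
        _ = ((p k * p j) * d k ^2 + (p k * p j) * d j ^2) / 2 := by ring
        _ ≤ (q k * d k ^2 + q j * d j ^2) / 2 := by
            have a1 := mul_le_mul_of_nonneg_right h1 (sq_nonneg (d k))
            have a2 := mul_le_mul_of_nonneg_right h2 (sq_nonneg (d j))
            linarith
        _ = (c k + c j) / 2 := rfl
    have hdg : p k * d k ^ 2 - (p k * d k) * (p k * d k) ≤ c k := by
      calc p k * d k ^ 2 - (p k * d k) * (p k * d k) = (p k * (1 - p k)) * d k ^2 := by ring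
        _ ≤ q k * d k ^ 2 := mul_le_mul_of_nonneg_right (hdiag k) (sq_nonneg _)
        _ = c k := rfl
    have := Finset.sum_le_sum hterm
    calc p k * d k ^ 2 - ((p k * d k) * (p k * d k) + ∑ j ∈ E.erase k, (p k * d k) * (p j * d j))
        = (p k * d k ^ 2 - (p k * d k) * (p k * d k))
          + ∑ j ∈ E.erase k, -((p k * d k) * (p j * d j)) := by
          rw [Finset.sum_neg_distrib]; ring
      _ ≤ c k + ∑ j ∈ E.erase k, (c k + c j) / 2 := add_le_add hdg this
  refine le_trans (Finset.sum_le_sum key) ?_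
  -- compute the bound
  have hval : ∀ k ∈ E, c k + ∑ j ∈ E.erase k, (c k + c j) / 2
      = (E.card : ℝ) / 2 * c k + G / 2 := by
    intro k hkE
    have hce : (E.erase k).card = E.card - 1 := Finset.card_erase_of_mem hkE
    have hc1 : 1 ≤ E.card := Finset.card_pos.mpr ⟨k, hkE⟩
    have hcec : ((E.erase k).card : ℝ) = (E.card : ℝ) - 1 := by
      rw [hce, Nat.cast_sub hc1, Nat.cast_one]
    have hsum2 : ∑ j ∈ E.erase k, c j = G - c k := by
      rw [hG, Finset.sum_erase_eq_sub hkE]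
    rw [← Finset.sum_div, Finset.sum_add_distrib, Finset.sum_const, hsum2, nsmul_eq_mul, hcec]
    ring
  refine le_of_eq ?_
  calc ∑ k ∈ E, (c k + ∑ j ∈ E.erase k, (c k + c j) / 2)
      = ∑ k ∈ E, ((E.card : ℝ)/2 * c k + G/2) := Finset.sum_congr rfl hval
    _ = (E.card : ℝ)/2 * G + (E.card : ℝ) * (G/2) := by
        rw [Finset.sum_add_distrib, ← Finset.mul_sum, Finset.sum_const, nsmul_eq_mul, ← hG]
    _ = ((K:ℝ) - 1) * G := by rw [← hcard]; ring
    _ = ((K:ℝ) - 1) * ∑ k ∈ E, min (p k) (1/4) * d k ^ 2 := rfl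


lemma shift_var' {K : ℕ} (p mm : Fin K → ℝ) (c : ℝ) (hp1 : ∑ k, p k = 1) :
    (∑ k, p k * mm k ^ 2) - (∑ k, p k * mm k) ^ 2
      = (∑ k, p k * (mm k - c) ^ 2) - (∑ k, p k * (mm k - c)) ^ 2 := by
  have e1 : ∑ k, p k * (mm k - c) ^ 2
      = (∑ k, p k * mm k ^ 2) - 2 * c * (∑ k, p k * mm k) + c ^ 2 := by
    have h : ∀ k ∈ Finset.univ, p k * (mm k - c) ^ 2
        = (p k * mm k ^ 2 - 2 * c * (p k * mm k)) + c ^ 2 * p k := fun k _ => by ring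
    rw [Finset.sum_congr rfl h, Finset.sum_add_distrib, Finset.sum_sub_distrib,
      ← Finset.mul_sum, ← Finset.mul_sum, hp1, mul_one]
  have e2 : ∑ k, p k * (mm k - c) = (∑ k, p k * mm k) - c := by
    have h : ∀ k ∈ Finset.univ, p k * (mm k - c)
        = p k * mm k - c * p k := fun k _ => by ring
    rw [Finset.sum_congr rfl h, Finset.sum_sub_distrib, ← Finset.mul_sum, hp1, mul_one]
  rw [e1, e2]; ring

variable {Ω : Type*} [MeasurableSpace Ω] {K : ℕ}

lemma ind_eq_indicator' (πt : Ω → Fin K) (k : Fin K) :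
    (fun ω => if πt ω = k then (1:ℝ) else 0)
      = Set.indicator {ω | πt ω = k} (fun _ => (1:ℝ)) := by
  ext ω; simp [Set.indicator_apply, Set.mem_setOf_eq]

lemma integral_ind' (P : Measure Ω) (πt : Ω → Fin K) (hπ : Measurable πt) (k : Fin K) :
    ∫ ω, (if πt ω = k then (1:ℝ) else 0) ∂P = (P {ω | πt ω = k}).toReal := by
  rw [show (fun ω => if πt ω = k then (1:ℝ) else 0)
      = Set.indicator {ω | πt ω = k} (fun _ => (1:ℝ)) from ind_eq_indicator' πt k]
  have h := MeasureTheory.integral_indicator_const (μ := P) (1:ℝ)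
    (hπ (measurableSet_singleton k))
  simp only [smul_eq_mul, mul_one] at h
  exact h

lemma integrable_ind' (P : Measure Ω) [IsProbabilityMeasure P]
    (πt : Ω → Fin K) (hπ : Measurable πt) (k : Fin K) :
    Integrable (fun ω => if πt ω = k then (1:ℝ) else 0) P := by
  rw [ind_eq_indicator' πt k]
  exact (integrable_const (1:ℝ)).indicator (hπ (measurableSet_singleton k))

lemma sum_p_one' (P : Measure Ω) [IsProbabilityMeasure P]
    (πt : Ω → Fin K) (hπ : Measurable πt) :
    ∑ k, (P {ω | πt ω = k}).toReal = 1 := by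
  have h1 : ∑ k, (P {ω | πt ω = k}).toReal
      = ∑ k, ∫ ω, (if πt ω = k then (1:ℝ) else 0) ∂P :=
    Finset.sum_congr rfl fun k _ => (integral_ind' P πt hπ k).symm
  rw [h1, ← integral_finset_sum _ (fun k _ => integrable_ind' P πt hπ k)]
  have h2 : ∀ ω, ∑ k, (if πt ω = k then (1:ℝ) else 0) = 1 := by
    intro ω; simp
  rw [integral_congr_ae (Filter.Eventually.of_forall h2)]
  simp

lemma per_t' (P : Measure Ω) [IsProbabilityMeasure P]
    (lam : ℝ) (Xt : Fin K → Ω → ℝ)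
    (hXmeas : ∀ k, Measurable (Xt k)) (hXL2 : ∀ k, MemLp (Xt k) 2 P)
    (m v : Fin K → ℝ)
    (hmean : ∀ k, ∫ ω, Xt k ω ∂P = m k) (hvar : ∀ k, variance (Xt k) P = v k)
    (πt : Ω → Fin K) (hπm : Measurable πt)
    (hπi : IndepFun πt (fun ω (k : Fin K) => Xt k ω) P) :
    variance (fun ω => Xt (πt ω) ω) P - lam * ∫ ω, Xt (πt ω) ω ∂P
      = (∑ k, (P {ω | πt ω = k}).toReal * (v k - lam * m k))
        + ((∑ k, (P {ω | πt ω = k}).toReal * m k ^ 2)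
            - (∑ k, (P {ω | πt ω = k}).toReal * m k) ^ 2) := by
  classical
  set p : Fin K → ℝ := fun k => (P {ω | πt ω = k}).toReal with hp
  set Y : Ω → ℝ := fun ω => Xt (πt ω) ω with hY
  set ind : Fin K → Ω → ℝ := fun k ω => if πt ω = k then (1:ℝ) else 0 with hind
  have hindm : ∀ k, Measurable (ind k) := by
    intro k
    exact Measurable.ite (hπm (measurableSet_singleton k)) measurable_const measurable_const
  have hYrep : ∀ ω, Y ω = ∑ k, ind k ω * Xt k ω := by
    intro ω; simp [hY, hind, ite_mul]
  have hYsqrep : ∀ ω, Y ω ^ 2 = ∑ k, ind k ω * Xt k ω ^ 2 := by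
    intro ω; simp [hY, hind, ite_mul]
  -- independence of indicator and reward functionals
  have hindep : ∀ (k : Fin K) (g : (Fin K → ℝ) → ℝ), Measurable g →
      IndepFun (ind k) (fun ω => g (fun j => Xt j ω)) P := by
    intro k g hg
    have hφ : Measurable (fun j : Fin K => if j = k then (1:ℝ) else 0) :=
      measurable_of_countable _
    exact hπi.comp hφ hg
  have hIk : ∀ k, IndepFun (ind k) (Xt k) P := by
    intro k
    exact hindep k (fun x => x k) (measurable_pi_apply k)
  have hIk2 : ∀ k, IndepFun (ind k) (fun ω => Xt k ω ^ 2) P := by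
    intro k
    exact hindep k (fun x => x k ^ 2) ((measurable_pi_apply k).pow_const 2)
  -- integrals of products
  have hprod : ∀ k, ∫ ω, ind k ω * Xt k ω ∂P = p k * m k := by
    intro k
    rw [(hIk k).integral_fun_mul_eq_mul_integral (hindm k).aestronglyMeasurable (hXmeas k).aestronglyMeasurable]
    rw [hmean k, hind]
    have := integral_ind' P πt hπm k
    simp only [hp]
    rw [this]
  have hEX2 : ∀ k, ∫ ω, Xt k ω ^ 2 ∂P = v k + m k ^ 2 := by
    intro k
    have := variance_eq_sub (hXL2 k)
    simp only [Pi.pow_apply] at this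
    rw [hvar k, hmean k] at this
    linarith
  have hprod2 : ∀ k, ∫ ω, ind k ω * Xt k ω ^ 2 ∂P = p k * (v k + m k ^ 2) := by
    intro k
    rw [(hIk2 k).integral_fun_mul_eq_mul_integral (hindm k).aestronglyMeasurable
      ((hXmeas k).pow_const 2).aestronglyMeasurable]
    rw [hEX2 k, hind]
    have := integral_ind' P πt hπm k
    simp only [hp]
    rw [this]
  -- integrability
  have hint1 : ∀ k, Integrable (fun ω => ind k ω * Xt k ω) P := by
    intro k
    refine Integrable.bdd_mul (c := 1) ((hXL2 k).integrable one_le_two)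
      (hindm k).aestronglyMeasurable (Filter.Eventually.of_forall fun ω => ?_)
    simp only [hind]
    split <;> simp
  have hint2 : ∀ k, Integrable (fun ω => ind k ω * Xt k ω ^ 2) P := by
    intro k
    refine Integrable.bdd_mul (c := 1) ?_ (hindm k).aestronglyMeasurable (Filter.Eventually.of_forall fun ω => ?_)
    · simpa [Pi.pow_apply] using (hXL2 k).integrable_sq
    · simp only [hind]; split <;> simp
  -- E Y
  have hEY : ∫ ω, Y ω ∂P = ∑ k, p k * m k := by
    rw [integral_congr_ae (Filter.Eventually.of_forall hYrep), integral_finset_sum _ (fun k _ => hint1 k)]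
    exact Finset.sum_congr rfl fun k _ => hprod k
  have hEY2 : ∫ ω, Y ω ^ 2 ∂P = ∑ k, p k * (v k + m k ^ 2) := by
    rw [integral_congr_ae (Filter.Eventually.of_forall hYsqrep),
      integral_finset_sum _ (fun k _ => hint2 k)]
    exact Finset.sum_congr rfl fun k _ => hprod2 k
  -- Memℒp Y 2
  have hYm : AEStronglyMeasurable Y P := by
    have : Measurable Y := by
      rw [show Y = fun ω => ∑ k, ind k ω * Xt k ω from funext hYrep]
      exact Finset.measurable_sum _ fun k _ => (hindm k).mul (hXmeas k)
    exact this.aestronglyMeasurable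
  have hYL2 : MemLp Y 2 P := by
    have hZ : MemLp (fun ω => ∑ k, |Xt k ω|) 2 P :=
      memLp_finset_sum _ fun k _ => (hXL2 k).abs
    refine hZ.of_le hYm ?_
    filter_upwards with ω
    have : |Y ω| ≤ ∑ k, |Xt k ω| := by
      rw [hY]
      exact Finset.single_le_sum (f := fun k => |Xt k ω|) (fun k _ => abs_nonneg _)
        (mem_univ (πt ω))
    simpa [Real.norm_eq_abs, abs_of_nonneg (Finset.sum_nonneg fun k _ => abs_nonneg (Xt k ω))]
      using this
  have hvarY : variance Y P = (∑ k, p k * (v k + m k ^ 2)) - (∑ k, p k * m k) ^ 2 := by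
    rw [variance_eq_sub hYL2]
    simp only [Pi.pow_apply]
    rw [hEY2, hEY]
  simp only [hp] at hvarY hEY
  rw [hvarY, hEY]
  have e1 : ∑ k, (P {ω | πt ω = k}).toReal * (v k + m k ^ 2)
      = (∑ k, (P {ω | πt ω = k}).toReal * (v k - lam * m k))
        + lam * (∑ k, (P {ω | πt ω = k}).toReal * m k)
        + ∑ k, (P {ω | πt ω = k}).toReal * m k ^ 2 := by
    rw [Finset.mul_sum, ← Finset.sum_add_distrib, ← Finset.sum_add_distrib]
    exact Finset.sum_congr rfl fun k _ => by ring
  rw [e1]; ring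


end aux

/-- **Regret upper bound (eq. (12) of the paper).** For any policy `π`,
`R_π(T) ≤ Σ_k E[τ_{k,T}]·Γ_k + (K−1)·Σ_{k≠k*} Σ_t min(Pr[π_t = k], 1/4)·Δ_k²`. -/
theorem regret_upper_bound_decision_variance
    {Ω : Type*} [MeasurableSpace Ω] (P : Measure Ω) [IsProbabilityMeasure P]
    (K T : ℕ) (hK : 0 < K)
    (lam : ℝ) (hlam : 0 ≤ lam)
    -- rewards: `X k t` is the reward of action `k` at time `t`
    (X : Fin K → Fin T → Ω → ℝ)
    (hXmeas : ∀ k t, Measurable (X k t))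
    (hXL2 : ∀ k t, MemLp (X k t) 2 P)
    -- the rewards are jointly independent across actions and times ...
    (hXindep : iIndepFun (fun p : Fin K × Fin T => X p.1 p.2) P)
    -- ... and identically distributed over time for each action
    (hXid : ∀ k (t t' : Fin T), Measure.map (X k t) P = Measure.map (X k t') P)
    (m v : Fin K → ℝ)
    (hmean : ∀ k t, ∫ ω, X k t ω ∂P = m k)
    (hvar : ∀ k t, variance (X k t) P = v k)
    -- the policy
    (π : Fin T → Ω → Fin K)
    (hπmeas : ∀ t, Measurable (π t))
    -- the action at time `t` is independent of the time-`t` rewards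
    (hπindep : ∀ t, IndepFun (π t) (fun ω (k : Fin K) => X k t ω) P)
    -- the optimal action `k*`
    (kstar : Fin K)
    (hkstar : ∀ k, v kstar - lam * m kstar ≤ v k - lam * m k) :
    (∑ t, (variance (fun ω => X (π t ω) t ω) P - lam * ∫ ω, X (π t ω) t ω ∂P))
        - T * (v kstar - lam * m kstar)
      ≤ (∑ k, (∫ ω, (∑ t, if π t ω = k then (1:ℝ) else 0) ∂P)
            * ((v k - lam * m k) - (v kstar - lam * m kstar)))
        + (K - 1) * ∑ k ∈ Finset.univ.erase kstar, ∑ t,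
            min ((P {ω | π t ω = k}).toReal) (1/4) * (m k - m kstar) ^ 2 := by
  classical
  -- notation
  set MVs : ℝ := v kstar - lam * m kstar with hMVs
  have hper : ∀ t, variance (fun ω => X (π t ω) t ω) P - lam * ∫ ω, X (π t ω) t ω ∂P
      = (∑ k, (P {ω | π t ω = k}).toReal * (v k - lam * m k))
        + ((∑ k, (P {ω | π t ω = k}).toReal * m k ^ 2)
            - (∑ k, (P {ω | π t ω = k}).toReal * m k) ^ 2) := fun t =>
    per_t' P lam (fun k => X k t) (fun k => hXmeas k t) (fun k => hXL2 k t) m v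
      (fun k => hmean k t) (fun k => hvar k t) (π t) (hπmeas t) (hπindep t)
  have hpone : ∀ t, ∑ k, (P {ω | π t ω = k}).toReal = 1 :=
    fun t => sum_p_one' P (π t) (hπmeas t)
  -- E[τ_k] = ∑_t Pr(π_t = k)
  have hτ : ∀ k, ∫ ω, (∑ t, if π t ω = k then (1:ℝ) else 0) ∂P
      = ∑ t, (P {ω | π t ω = k}).toReal := by
    intro k
    rw [integral_finset_sum _ (fun t _ => integrable_ind' P (π t) (hπmeas t) k)]
    exact Finset.sum_congr rfl fun t _ => integral_ind' P (π t) (hπmeas t) k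
  -- rewrite both sides as sums over t
  have hT : (T : ℝ) * MVs = ∑ _t : Fin T, MVs := by
    simp [Finset.sum_const, Finset.card_univ, nsmul_eq_mul]
  have hRHS1 : (∑ k, (∫ ω, (∑ t, if π t ω = k then (1:ℝ) else 0) ∂P)
        * ((v k - lam * m k) - MVs))
      = ∑ t, ∑ k, (P {ω | π t ω = k}).toReal * ((v k - lam * m k) - MVs) := by
    rw [Finset.sum_congr rfl (fun k _ => by rw [hτ k, Finset.sum_mul])]
    exact Finset.sum_comm
  have hRHS2 : ((K:ℝ) - 1) * ∑ k ∈ Finset.univ.erase kstar, ∑ t,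
        min ((P {ω | π t ω = k}).toReal) (1/4) * (m k - m kstar) ^ 2
      = ∑ t, ((K:ℝ) - 1) * ∑ k ∈ Finset.univ.erase kstar,
          min ((P {ω | π t ω = k}).toReal) (1/4) * (m k - m kstar) ^ 2 := by
    rw [Finset.sum_comm, Finset.mul_sum]
  rw [hT, ← Finset.sum_sub_distrib, hRHS1, hRHS2, ← Finset.sum_add_distrib]
  refine Finset.sum_le_sum fun t _ => ?_
  rw [hper t]
  set p : Fin K → ℝ := fun k => (P {ω | π t ω = k}).toReal with hpd
  have hp0 : ∀ k, 0 ≤ p k := fun k => ENNReal.toReal_nonneg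
  have hp1 : ∑ k, p k = 1 := hpone t
  -- first part: mixture of MV gaps
  have h1 : (∑ k, p k * (v k - lam * m k)) - MVs = ∑ k, p k * ((v k - lam * m k) - MVs) := by
    have h : ∀ k ∈ Finset.univ, p k * ((v k - lam * m k) - MVs)
        = p k * (v k - lam * m k) - p k * MVs := fun k _ => by ring
    rw [Finset.sum_congr rfl h, Finset.sum_sub_distrib, ← Finset.sum_mul, hp1, one_mul]
  -- second part: mixture variance bound
  have h2 : (∑ k, p k * m k ^ 2) - (∑ k, p k * m k) ^ 2
      ≤ ((K:ℝ) - 1) * ∑ k ∈ Finset.univ.erase kstar,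
          min (p k) (1/4) * (m k - m kstar) ^ 2 := by
    have hs := shift_var' p m (m kstar) hp1
    rw [hs]
    exact alg_key' hK kstar p (fun k => m k - m kstar) hp0 hp1 (by simp)
  calc (∑ k, p k * (v k - lam * m k))
        + ((∑ k, p k * m k ^ 2) - (∑ k, p k * m k) ^ 2) - MVs
      = ((∑ k, p k * (v k - lam * m k)) - MVs)
        + ((∑ k, p k * m k ^ 2) - (∑ k, p k * m k) ^ 2) := by ring
    _ ≤ (∑ k, p k * ((v k - lam * m k) - MVs))
        + ((K:ℝ) - 1) * ∑ k ∈ Finset.univ.erase kstar,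
            min (p k) (1/4) * (m k - m kstar) ^ 2 := by
        rw [h1]; exact add_le_add_right h2 _
end
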